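/- Let f : ℝⁿ → ℝ be L-smooth and μ-strongly convex, and let 0 < η ≤ 1/L. Then for all x, y, ‖(x − η∇f(x)) − (y − η∇f(y))‖² ≤ (1 − ημ)‖x − y‖². -/

import Mathlib

open scoped RealInnerProductSpace

section Aux

variable {E : Type*} [NormedAddCommGroup E] [InnerProductSpace ℝ E] [CompleteSpace E]

private lemma aux_line_hasDerivAt (f : E → ℝ) (hdiff : Differentiable ℝ f) (x v : E) (t : ℝ) :
    HasDerivAt (fun s : ℝ => f (x + s • v)) ⟪gradient f (x + t • v), v⟫ t := by
  have hline : HasDerivAt (fun s : ℝ => x + s • v) v t := by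
    simpa using ((hasDerivAt_id t).smul_const v).const_add x
  have hg : HasFDerivAt f (InnerProductSpace.toDual ℝ E (gradient f (x + t • v))) (x + t • v) :=
    hasGradientAt_iff_hasFDerivAt.mp (hdiff _).hasGradientAt
  exact hg.comp_hasDerivAt t hline

private lemma aux_grad_cont (f : E → ℝ) (L : ℝ) (hL : 0 < L)
    (hsmooth : ∀ x y, ‖gradient f x - gradient f y‖ ≤ L * ‖x - y‖) :
    Continuous (gradient f) := by
  have h : LipschitzWith (Real.toNNReal L) (gradient f) := by
    apply LipschitzWith.of_dist_le_mul
    intro a b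
    rw [dist_eq_norm, dist_eq_norm]
    refine (hsmooth a b).trans ?_
    gcongr
    exact Real.le_coe_toNNReal L
  exact h.continuous

private lemma aux_ftc (f : E → ℝ) (hdiff : Differentiable ℝ f) (L : ℝ) (hL : 0 < L)
    (hsmooth : ∀ x y, ‖gradient f x - gradient f y‖ ≤ L * ‖x - y‖) (x v : E) :
    f (x + v) - f x = ∫ t in (0:ℝ)..1, ⟪gradient f (x + t • v), v⟫ := by
  have hcont : Continuous fun t : ℝ => ⟪gradient f (x + t • v), v⟫ := by
    apply Continuous.inner _ continuous_const
    exact (aux_grad_cont f L hL hsmooth).comp (by continuity)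
  have := intervalIntegral.integral_eq_sub_of_hasDerivAt
    (f := fun s : ℝ => f (x + s • v)) (f' := fun t : ℝ => ⟪gradient f (x + t • v), v⟫)
    (a := 0) (b := 1) (fun t _ => aux_line_hasDerivAt f hdiff x v t)
    (hcont.intervalIntegrable 0 1)
  rw [this]
  simp

private lemma aux_descent (f : E → ℝ) (hdiff : Differentiable ℝ f) (L : ℝ) (hL : 0 < L)
    (hsmooth : ∀ x y, ‖gradient f x - gradient f y‖ ≤ L * ‖x - y‖) (x v : E) :
    f (x + v) ≤ f x + ⟪gradient f x, v⟫ + L / 2 * ‖v‖ ^ 2 := by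
  have key : f (x + v) - f x = ∫ t in (0:ℝ)..1, ⟪gradient f (x + t • v), v⟫ :=
    aux_ftc f hdiff L hL hsmooth x v
  have hcont : Continuous fun t : ℝ => ⟪gradient f (x + t • v), v⟫ := by
    apply Continuous.inner _ continuous_const
    exact (aux_grad_cont f L hL hsmooth).comp (by continuity)
  have hc2 : Continuous fun t : ℝ => ⟪gradient f x, v⟫ + (L * ‖v‖ ^ 2) * t := by continuity
  have hc3 : Continuous fun t : ℝ => (L * ‖v‖ ^ 2) * t := by continuity
  have hmono : (∫ t in (0:ℝ)..1, ⟪gradient f (x + t • v), v⟫)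
      ≤ ∫ t in (0:ℝ)..1, (⟪gradient f x, v⟫ + (L * ‖v‖ ^ 2) * t) := by
    apply intervalIntegral.integral_mono_on zero_le_one (hcont.intervalIntegrable 0 1)
      (hc2.intervalIntegrable 0 1)
    intro t ht
    have h1 : ⟪gradient f (x + t • v) - gradient f x, v⟫
        ≤ ‖gradient f (x + t • v) - gradient f x‖ * ‖v‖ := real_inner_le_norm _ _
    have h2 : ‖gradient f (x + t • v) - gradient f x‖ ≤ L * (t * ‖v‖) := by
      have := hsmooth (x + t • v) x
      simpa [norm_smul, abs_of_nonneg ht.1] using this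
    have h3 : ⟪gradient f (x + t • v), v⟫
        = ⟪gradient f x, v⟫ + ⟪gradient f (x + t • v) - gradient f x, v⟫ := by
      rw [inner_sub_left]; ring
    nlinarith [norm_nonneg v, norm_nonneg (gradient f (x + t • v) - gradient f x), ht.1,
      mul_le_mul_of_nonneg_right h2 (norm_nonneg v)]
  have hval : (∫ t in (0:ℝ)..1, (⟪gradient f x, v⟫ + (L * ‖v‖ ^ 2) * t))
      = ⟪gradient f x, v⟫ + L / 2 * ‖v‖ ^ 2 := by
    rw [intervalIntegral.integral_add (intervalIntegrable_const)
      (hc3.intervalIntegrable 0 1),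
      intervalIntegral.integral_const_mul]
    simp [integral_id]
    ring
  linarith [key, hmono, hval.le, hval.ge]

private lemma aux_grad_ineq {h : E → ℝ} (hc : ConvexOn ℝ Set.univ h) {x gx : E}
    (hx : HasGradientAt h gx x) (y : E) : h x + ⟪gx, y - x⟫ ≤ h y := by
  have hline : HasDerivAt (fun s : ℝ => x + s • (y - x)) (y - x) 0 := by
    simpa using ((hasDerivAt_id (0:ℝ)).smul_const (y - x)).const_add x
  have h0 : x = x + (0:ℝ) • (y - x) := by simp
  have hfd : HasFDerivAt h (InnerProductSpace.toDual ℝ E gx) (x + (0:ℝ) • (y - x)) := by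
    rw [← h0]; exact hasGradientAt_iff_hasFDerivAt.mp hx
  have hψ : HasDerivAt (fun s : ℝ => h (x + s • (y - x))) ⟪gx, y - x⟫ 0 := by
    exact hfd.comp_hasDerivAt 0 hline
  have hslope := hasDerivAt_iff_tendsto_slope.mp hψ
  have hmem : Set.Ioo (0:ℝ) 1 ∈ nhdsWithin (0:ℝ) (Set.Ioi 0) :=
    Ioo_mem_nhdsGT_of_mem ⟨le_refl 0, zero_lt_one⟩
  have hle : ∀ᶠ t in nhdsWithin (0:ℝ) (Set.Ioi 0),
      slope (fun s : ℝ => h (x + s • (y - x))) 0 t ≤ h y - h x := by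
    filter_upwards [hmem] with t ht
    have hco := hc.2 (Set.mem_univ y) (Set.mem_univ x) ht.1.le (by linarith [ht.2] : (0:ℝ) ≤ 1 - t)
      (by ring)
    have heq : x + t • (y - x) = t • y + (1 - t) • x := by
      rw [smul_sub, sub_smul, one_smul]; abel
    rw [slope_def_field]
    simp only [zero_smul, add_zero, sub_zero]
    rw [heq, div_le_iff₀ ht.1]
    have := hco
    simp only [smul_eq_mul] at this
    nlinarith [this]
  have hsub : nhdsWithin (0:ℝ) (Set.Ioi 0) ≤ nhdsWithin (0:ℝ) {(0:ℝ)}ᶜ :=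
    nhdsWithin_mono 0 (fun t ht => ne_of_gt ht)
  have := le_of_tendsto (hslope.mono_left hsub) hle
  linarith

private lemma aux_strong_mono (f : E → ℝ) (μ : ℝ) (hdiff : Differentiable ℝ f)
    (hsc : StrongConvexOn Set.univ μ f) (x y : E) :
    μ * ‖x - y‖ ^ 2 ≤ ⟪gradient f x - gradient f y, x - y⟫ := by
  have hc : ConvexOn ℝ Set.univ fun z => f z - μ / 2 * ‖z‖ ^ 2 :=
    strongConvexOn_iff_convex.mp hsc
  have hgrad : ∀ z : E, HasGradientAt (fun w => f w - μ / 2 * ‖w‖ ^ 2)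
      (gradient f z - (μ / 2 * 2) • z) z := by
    intro z
    have h1 : HasFDerivAt f (InnerProductSpace.toDual ℝ E (gradient f z)) z :=
      hasGradientAt_iff_hasFDerivAt.mp (hdiff z).hasGradientAt
    have h2 : HasFDerivAt (fun w : E => μ / 2 * ‖w‖ ^ 2) ((μ / 2) • (2 • innerSL ℝ z)) z :=
      (hasStrictFDerivAt_norm_sq z).hasFDerivAt.const_mul (μ / 2)
    have h3 := h1.sub h2
    rw [hasGradientAt_iff_hasFDerivAt]
    convert h3 using 1
    · rfl
    · rfl
    · rfl
    ext w
    simp [inner_sub_left, real_inner_smul_left, InnerProductSpace.toDual_apply_apply]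
    ring
  have k1 := aux_grad_ineq hc (hgrad x) y
  have k2 := aux_grad_ineq hc (hgrad y) x
  have e1 : ⟪gradient f x - (μ / 2 * 2) • x, y - x⟫
      = ⟪gradient f x, y - x⟫ - μ * ⟪x, y - x⟫ := by
    rw [inner_sub_left, real_inner_smul_left]; ring
  have e2 : ⟪gradient f y - (μ / 2 * 2) • y, x - y⟫
      = ⟪gradient f y, x - y⟫ - μ * ⟪y, x - y⟫ := by
    rw [inner_sub_left, real_inner_smul_left]; ring
  rw [e1] at k1; rw [e2] at k2
  have key : ⟪gradient f x - gradient f y, x - y⟫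
      = -(⟪gradient f x, y - x⟫ + ⟪gradient f y, x - y⟫) := by
    rw [inner_sub_left]
    have : ⟪gradient f x, y - x⟫ = -⟪gradient f x, x - y⟫ := by
      rw [← inner_neg_right]; congr 1; abel
    rw [this]; ring
  have nrm : ⟪x, y - x⟫ + ⟪y, x - y⟫ = -(‖x - y‖ ^ 2) := by
    rw [← real_inner_self_eq_norm_sq, inner_sub_left, inner_sub_right, inner_sub_right,
      inner_sub_right, real_inner_comm y x]
    ring
  have hmul : μ * (⟪x, y - x⟫ + ⟪y, x - y⟫) = -(μ * ‖x - y‖ ^ 2) := by rw [nrm]; ring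
  have hmul' : μ * ⟪x, y - x⟫ + μ * ⟪y, x - y⟫ = -(μ * ‖x - y‖ ^ 2) := by rw [← hmul]; ring
  linarith [k1, k2, key, hmul']

private lemma aux_one_sided (f : E → ℝ) (L : ℝ) (hL : 0 < L) (hdiff : Differentiable ℝ f)
    (hconv : ConvexOn ℝ Set.univ f)
    (hsmooth : ∀ x y, ‖gradient f x - gradient f y‖ ≤ L * ‖x - y‖) (a b : E) :
    f a + ⟪gradient f a, b - a⟫ + 1 / (2 * L) * ‖gradient f b - gradient f a‖ ^ 2 ≤ f b := by
  set F : E → ℝ := fun z => f z - ⟪gradient f a, z⟫ with hF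
  have hgradF : ∀ z : E, HasGradientAt F (gradient f z - gradient f a) z := by
    intro z
    have h1 : HasFDerivAt f (InnerProductSpace.toDual ℝ E (gradient f z)) z :=
      hasGradientAt_iff_hasFDerivAt.mp (hdiff z).hasGradientAt
    have h2 : HasFDerivAt (fun w : E => ⟪gradient f a, w⟫)
        (InnerProductSpace.toDual ℝ E (gradient f a)) z := by
      have := (InnerProductSpace.toDual ℝ E (gradient f a)).hasFDerivAt (x := z)
      convert this using 1
      ext w; simp
    have h3 := h1.sub h2
    rw [hasGradientAt_iff_hasFDerivAt]
    convert h3 using 1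
    · rfl
    · rfl
    · rfl
    ext w
    simp [inner_sub_left]
  have hFdiff : Differentiable ℝ F := fun z => (hgradF z).differentiableAt
  have hgF : ∀ z : E, gradient F z = gradient f z - gradient f a := fun z => (hgradF z).gradient
  have hFsmooth : ∀ z w, ‖gradient F z - gradient F w‖ ≤ L * ‖z - w‖ := by
    intro z w
    rw [hgF, hgF, sub_sub_sub_cancel_right]
    exact hsmooth z w
  have hFconv : ConvexOn ℝ Set.univ F := by
    apply hconv.sub
    refine ⟨convex_univ, ?_⟩
    intro p _ q _ s t hs ht hst
    simp only [inner_add_right, real_inner_smul_right, smul_eq_mul]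
    exact le_refl _
  set g : E := gradient f b - gradient f a with hg
  set v : E := -(1 / L) • g with hv
  have h1 : F a ≤ F (b + v) := by
    have := aux_grad_ineq hFconv (hgradF a) (b + v)
    simpa using this
  have h2 : F (b + v) ≤ F b + ⟪gradient F b, v⟫ + L / 2 * ‖v‖ ^ 2 :=
    aux_descent F hFdiff L hL hFsmooth b v
  have e1 : ⟪gradient F b, v⟫ = -(1 / L) * ‖g‖ ^ 2 := by
    rw [hgF, ← hg, hv, real_inner_smul_right, real_inner_self_eq_norm_sq]
  have e2 : ‖v‖ ^ 2 = (1 / L) ^ 2 * ‖g‖ ^ 2 := by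
    rw [hv, norm_smul]
    rw [norm_neg, Real.norm_eq_abs, abs_of_pos (by positivity : (0:ℝ) < 1 / L)]
    ring
  have hFa : F a = f a - ⟪gradient f a, a⟫ := rfl
  have hFb : F b = f b - ⟪gradient f a, b⟫ := rfl
  have einner : ⟪gradient f a, b - a⟫ = ⟪gradient f a, b⟫ - ⟪gradient f a, a⟫ :=
    inner_sub_right _ _ _
  have hL2 : L / 2 * ((1 / L) ^ 2 * ‖g‖ ^ 2) = 1 / (2 * L) * ‖g‖ ^ 2 := by
    field_simp
  rw [hFb] at h2
  rw [e1, e2, hL2] at h2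
  have hcomb := h1.trans h2
  rw [hFa] at hcomb
  rw [einner]
  have hrest : -(1 / L) * ‖g‖ ^ 2 + 1 / (2 * L) * ‖g‖ ^ 2 = -(1 / (2 * L)) * ‖g‖ ^ 2 := by
    field_simp; ring
  linarith [hcomb, hrest]

private lemma aux_cocoercive (f : E → ℝ) (L : ℝ) (hL : 0 < L) (hdiff : Differentiable ℝ f)
    (hconv : ConvexOn ℝ Set.univ f)
    (hsmooth : ∀ x y, ‖gradient f x - gradient f y‖ ≤ L * ‖x - y‖) (x y : E) :
    ‖gradient f x - gradient f y‖ ^ 2 ≤ L * ⟪gradient f x - gradient f y, x - y⟫ := by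
  have k1 := aux_one_sided f L hL hdiff hconv hsmooth x y
  have k2 := aux_one_sided f L hL hdiff hconv hsmooth y x
  have hnrm : ‖gradient f y - gradient f x‖ = ‖gradient f x - gradient f y‖ := norm_sub_rev _ _
  rw [hnrm] at k1
  have key : ⟪gradient f x - gradient f y, x - y⟫
      = -(⟪gradient f x, y - x⟫ + ⟪gradient f y, x - y⟫) := by
    rw [inner_sub_left]
    have : ⟪gradient f x, y - x⟫ = -⟪gradient f x, x - y⟫ := by
      rw [← inner_neg_right]; congr 1; abel
    rw [this]; ring
  have hLpos : (0:ℝ) < 2 * L := by linarith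
  have h2L : 1 / (2 * L) * ‖gradient f x - gradient f y‖ ^ 2 * (2 * L)
      = ‖gradient f x - gradient f y‖ ^ 2 := by field_simp
  nlinarith [k1, k2, key, sq_nonneg ‖gradient f x - gradient f y‖]

end Aux

/-- One-step contraction of gradient descent for an `L`-smooth `μ`-strongly
convex function with step size `0 < η ≤ 1/L`. -/
theorem gradient_descent_contraction_strongly_convex {n : ℕ}
    (f : EuclideanSpace ℝ (Fin n) → ℝ) (L μ η : ℝ) (hL : 0 < L) (hμ : 0 < μ)
    (hη : 0 < η) (hη' : η ≤ 1 / L)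
    (hdiff : Differentiable ℝ f)
    (hsc : StrongConvexOn Set.univ μ f)
    (hsmooth : ∀ x y, ‖gradient f x - gradient f y‖ ≤ L * ‖x - y‖) :
    ∀ x y : EuclideanSpace ℝ (Fin n),
      ‖(x - η • gradient f x) - (y - η • gradient f y)‖ ^ 2 ≤
        (1 - η * μ) * ‖x - y‖ ^ 2 := by
  intro x y
  have hconv : ConvexOn ℝ Set.univ f := hsc.convexOn (fun r => by positivity)
  set d : EuclideanSpace ℝ (Fin n) := x - y with hd
  set g : EuclideanSpace ℝ (Fin n) := gradient f x - gradient f y with hgdef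
  have hrw : (x - η • gradient f x) - (y - η • gradient f y) = d - η • g := by
    rw [hd, hgdef, smul_sub]; abel
  rw [hrw]
  have hexp : ‖d - η • g‖ ^ 2 = ‖d‖ ^ 2 - 2 * (η * ⟪g, d⟫) + η ^ 2 * ‖g‖ ^ 2 := by
    rw [norm_sub_sq_real, real_inner_smul_right, norm_smul, Real.norm_eq_abs,
      abs_of_pos hη, mul_pow, real_inner_comm]
  rw [hexp]
  have hA : μ * ‖d‖ ^ 2 ≤ ⟪g, d⟫ := aux_strong_mono f μ hdiff hsc x y
  have hB : ‖g‖ ^ 2 ≤ L * ⟪g, d⟫ := aux_cocoercive f L hL hdiff hconv hsmooth x y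
  have hηL : η * L ≤ 1 := by
    rw [← le_div_iff₀ hL] at *; linarith [hη']
  have hI : (0:ℝ) ≤ ⟪g, d⟫ := le_trans (by positivity) hA
  nlinarith [mul_le_mul_of_nonneg_left hB (sq_nonneg η),
    mul_nonneg (mul_nonneg hη.le hI) (sub_nonneg.mpr hηL),
    mul_le_mul_of_nonneg_left hA hη.le, sq_nonneg η, norm_nonneg d, sq_nonneg ‖d‖]
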